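/- For the family ρ(α) = α·(|0⟩⟨0| ⊗ 𝟙/d_B) + (1−α)·(𝟙/d_A ⊗ |0⟩⟨0|), α ∈ [0,1], the linear entropies are S_L(ρ_A(α)) = (d_A−1)/d_A·(1−α²), S_L(ρ_B(α)) = (d_B−1)/d_B·(2α−α²), and S_L(ρ(α)) = (d_A−1)/d_A + 2(d_B−1)/(d_A d_B)·α − (d_A+d_B−2)/(d_A d_B)·α², and these values satisfy inhomogeneous subadditivity with equality: S_L(ρ(α)) = (1/d_B)S_L(ρ_A(α)) + (1/d_A)S_L(ρ_B(α)) + (d_A−1)(d_B−1)/(d_A d_B). -/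

import Mathlib

open Matrix
open scoped ComplexOrder Kronecker

noncomputable def linEntropy {n : Type*} [Fintype n] (ρ : Matrix n n ℂ) : ℝ :=
  1 - ((ρ * ρ).trace).re

noncomputable def ptraceB {dA dB : ℕ} (ρ : Matrix (Fin dA × Fin dB) (Fin dA × Fin dB) ℂ) :
    Matrix (Fin dA) (Fin dA) ℂ := fun i j => ∑ k, ρ (i, k) (j, k)

noncomputable def ptraceA {dA dB : ℕ} (ρ : Matrix (Fin dA × Fin dB) (Fin dA × Fin dB) ℂ) :
    Matrix (Fin dB) (Fin dB) ℂ := fun i j => ∑ k, ρ (k, i) (k, j)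

lemma trace_stdBasis {d : Type*} [Fintype d] [DecidableEq d] (i : d) (c : ℂ) :
    (Matrix.single i i c).trace = c := by
  simp [Matrix.trace, Matrix.diag, Matrix.single]

lemma ptraceB_kron {dA dB : ℕ} (M : Matrix (Fin dA) (Fin dA) ℂ)
    (N : Matrix (Fin dB) (Fin dB) ℂ) : ptraceB (M ⊗ₖ N) = N.trace • M := by
  funext i j
  simp only [ptraceB, Matrix.kroneckerMap_apply, Matrix.smul_apply, Matrix.trace, Matrix.diag,
    smul_eq_mul, Finset.sum_mul]
  rw [Finset.sum_congr rfl fun k _ => mul_comm (M i j) (N k k)]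

lemma ptraceA_kron {dA dB : ℕ} (M : Matrix (Fin dA) (Fin dA) ℂ)
    (N : Matrix (Fin dB) (Fin dB) ℂ) : ptraceA (M ⊗ₖ N) = M.trace • N := by
  funext i j
  simp only [ptraceA, Matrix.kroneckerMap_apply, Matrix.smul_apply, Matrix.trace, Matrix.diag,
    smul_eq_mul, Finset.sum_mul]

lemma ptraceB_lin {dA dB : ℕ} (x y : ℂ)
    (M N : Matrix (Fin dA × Fin dB) (Fin dA × Fin dB) ℂ) :
    ptraceB (x • M + y • N) = x • ptraceB M + y • ptraceB N := by
  funext i j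
  simp [ptraceB, Finset.sum_add_distrib, Finset.mul_sum]

lemma ptraceA_lin {dA dB : ℕ} (x y : ℂ)
    (M N : Matrix (Fin dA × Fin dB) (Fin dA × Fin dB) ℂ) :
    ptraceA (x • M + y • N) = x • ptraceA M + y • ptraceA N := by
  funext i j
  simp [ptraceA, Finset.sum_add_distrib, Finset.mul_sum]

/-- trace of (a•E₀₀ + b•1)² over Fin d -/
lemma trace_sq_aux {d : ℕ} (hd : 0 < d) (a b : ℂ) :
    (((a • Matrix.single (⟨0, hd⟩ : Fin d) (⟨0, hd⟩ : Fin d) (1 : ℂ)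
        + b • (1 : Matrix (Fin d) (Fin d) ℂ)) *
      (a • Matrix.single (⟨0, hd⟩ : Fin d) (⟨0, hd⟩ : Fin d) (1 : ℂ)
        + b • (1 : Matrix (Fin d) (Fin d) ℂ))).trace)
      = a ^ 2 + 2 * a * b + d * b ^ 2 := by
  rw [add_mul, mul_add, mul_add]
  rw [Matrix.smul_mul, Matrix.smul_mul, Matrix.smul_mul, Matrix.smul_mul,
    Matrix.mul_smul, Matrix.mul_smul, Matrix.mul_smul, Matrix.mul_smul,
    Matrix.single_mul_single_same, Matrix.mul_one, Matrix.one_mul, Matrix.one_mul]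
  simp only [Matrix.trace_add, Matrix.trace_smul, trace_stdBasis, Matrix.trace_one]
  simp only [smul_eq_mul, Fintype.card_fin]
  ring


lemma trace_sq_kron {dA dB : ℕ} (ha : 0 < dA) (hb : 0 < dB) (a b : ℂ) :
    (((a • ((Matrix.single (⟨0, ha⟩ : Fin dA) (⟨0, ha⟩ : Fin dA) (1 : ℂ)) ⊗ₖ
          (1 : Matrix (Fin dB) (Fin dB) ℂ))
        + b • ((1 : Matrix (Fin dA) (Fin dA) ℂ) ⊗ₖ
          (Matrix.single (⟨0, hb⟩ : Fin dB) (⟨0, hb⟩ : Fin dB) (1 : ℂ)))) *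
      (a • ((Matrix.single (⟨0, ha⟩ : Fin dA) (⟨0, ha⟩ : Fin dA) (1 : ℂ)) ⊗ₖ
          (1 : Matrix (Fin dB) (Fin dB) ℂ))
        + b • ((1 : Matrix (Fin dA) (Fin dA) ℂ) ⊗ₖ
          (Matrix.single (⟨0, hb⟩ : Fin dB) (⟨0, hb⟩ : Fin dB) (1 : ℂ))))).trace)
      = a ^ 2 * dB + 2 * a * b + b ^ 2 * dA := by
  rw [add_mul, mul_add, mul_add]
  rw [Matrix.smul_mul, Matrix.smul_mul, Matrix.smul_mul, Matrix.smul_mul,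
    Matrix.mul_smul, Matrix.mul_smul, Matrix.mul_smul, Matrix.mul_smul,
    ← Matrix.mul_kronecker_mul, ← Matrix.mul_kronecker_mul, ← Matrix.mul_kronecker_mul,
    ← Matrix.mul_kronecker_mul, Matrix.single_mul_single_same, Matrix.single_mul_single_same,
    Matrix.mul_one, Matrix.mul_one, Matrix.one_mul, Matrix.one_mul]
  simp only [Matrix.one_mul, Matrix.mul_one, Matrix.trace_add, Matrix.trace_smul,
    Matrix.trace_kronecker, trace_stdBasis, Matrix.trace_one, smul_eq_mul, Fintype.card_fin]
  ring

/-- For the family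
`ρ(α) = α (|0⟩⟨0| ⊗ 𝟙/d_B) + (1-α)(𝟙/d_A ⊗ |0⟩⟨0|)`, the linear entropies are as stated and
they saturate inhomogeneous subadditivity. -/
theorem family_saturates_ISA (dA dB : ℕ) (hA : 2 ≤ dA) (hB : 2 ≤ dB)
    (α : ℝ) (hα0 : 0 ≤ α) (hα1 : α ≤ 1)
    (ρ : Matrix (Fin dA × Fin dB) (Fin dA × Fin dB) ℂ)
    (hρdef : ρ = (α : ℂ) •
        ((Matrix.single (⟨0, by omega⟩ : Fin dA) (⟨0, by omega⟩ : Fin dA) (1 : ℂ)) ⊗ₖ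
          ((dB : ℂ)⁻¹ • (1 : Matrix (Fin dB) (Fin dB) ℂ)))
      + ((1 - α : ℝ) : ℂ) •
        (((dA : ℂ)⁻¹ • (1 : Matrix (Fin dA) (Fin dA) ℂ)) ⊗ₖ
          (Matrix.single (⟨0, by omega⟩ : Fin dB) (⟨0, by omega⟩ : Fin dB) (1 : ℂ)))) :
    linEntropy (ptraceB ρ) = ((dA : ℝ) - 1) / dA * (1 - α ^ 2) ∧
    linEntropy (ptraceA ρ) = ((dB : ℝ) - 1) / dB * (2 * α - α ^ 2) ∧
    linEntropy ρ = ((dA : ℝ) - 1) / dA + 2 * ((dB : ℝ) - 1) / ((dA : ℝ) * dB) * α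
      - ((dA : ℝ) + dB - 2) / ((dA : ℝ) * dB) * α ^ 2 ∧
    linEntropy ρ = (1 / dB) * linEntropy (ptraceB ρ) + (1 / dA) * linEntropy (ptraceA ρ)
      + ((dA : ℝ) - 1) * ((dB : ℝ) - 1) / ((dA : ℝ) * dB) := by

  have hApos : 0 < dA := by omega
  have hBpos : 0 < dB := by omega
  have hAne : (dA : ℂ) ≠ 0 := Nat.cast_ne_zero.mpr (by omega)
  have hBne : (dB : ℂ) ≠ 0 := Nat.cast_ne_zero.mpr (by omega)
  have hARne : (dA : ℝ) ≠ 0 := Nat.cast_ne_zero.mpr (by omega)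
  have hBRne : (dB : ℝ) ≠ 0 := Nat.cast_ne_zero.mpr (by omega)
  set EA := Matrix.single (⟨0, hApos⟩ : Fin dA) (⟨0, hApos⟩ : Fin dA) (1 : ℂ) with hEA
  set EB := Matrix.single (⟨0, hBpos⟩ : Fin dB) (⟨0, hBpos⟩ : Fin dB) (1 : ℂ) with hEB
  have hρ : ρ = ((α : ℂ) * (dB : ℂ)⁻¹) • (EA ⊗ₖ (1 : Matrix (Fin dB) (Fin dB) ℂ))
      + (((1 - α : ℝ) : ℂ) * (dA : ℂ)⁻¹) • ((1 : Matrix (Fin dA) (Fin dA) ℂ) ⊗ₖ EB) := by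
    rw [hρdef, Matrix.kronecker_smul, Matrix.smul_kronecker, smul_smul, smul_smul]
  -- marginal A
  have hpB : ptraceB ρ = (α : ℂ) • EA
      + ((((1 - α : ℝ) : ℂ) * (dA : ℂ)⁻¹)) • (1 : Matrix (Fin dA) (Fin dA) ℂ) := by
    rw [hρ, ptraceB_lin, ptraceB_kron, ptraceB_kron, Matrix.trace_one, hEB, trace_stdBasis]
    simp only [Fintype.card_fin, smul_smul, one_smul]
    rw [mul_assoc, inv_mul_cancel₀ hBne, mul_one]
  have hpA : ptraceA ρ = (((1 - α : ℝ) : ℂ)) • EB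
      + (((α : ℂ) * (dB : ℂ)⁻¹)) • (1 : Matrix (Fin dB) (Fin dB) ℂ) := by
    rw [hρ, ptraceA_lin, ptraceA_kron, ptraceA_kron, Matrix.trace_one, hEA, trace_stdBasis]
    simp only [Fintype.card_fin, smul_smul, one_smul]
    rw [add_comm]
    rw [mul_assoc, inv_mul_cancel₀ hAne, mul_one]
  have htB : ((ptraceB ρ * ptraceB ρ).trace).re
      = α ^ 2 + 2 * α * ((1 - α) / dA) + dA * ((1 - α) / dA) ^ 2 := by
    rw [hpB, hEA, trace_sq_aux hApos]
    have : ((α : ℂ)) ^ 2 + 2 * (α : ℂ) * (((1 - α : ℝ) : ℂ) * (dA : ℂ)⁻¹)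
        + (dA : ℂ) * (((1 - α : ℝ) : ℂ) * (dA : ℂ)⁻¹) ^ 2
        = (((α ^ 2 + 2 * α * ((1 - α) / dA) + dA * ((1 - α) / dA) ^ 2 : ℝ)) : ℂ) := by
      push_cast
      ring
    rw [this, Complex.ofReal_re]
  have htA : ((ptraceA ρ * ptraceA ρ).trace).re
      = (1 - α) ^ 2 + 2 * (1 - α) * (α / dB) + dB * (α / dB) ^ 2 := by
    rw [hpA, hEB, trace_sq_aux hBpos]
    have : (((1 - α : ℝ) : ℂ)) ^ 2 + 2 * ((1 - α : ℝ) : ℂ) * ((α : ℂ) * (dB : ℂ)⁻¹)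
        + (dB : ℂ) * ((α : ℂ) * (dB : ℂ)⁻¹) ^ 2
        = ((((1 - α) ^ 2 + 2 * (1 - α) * (α / dB) + dB * (α / dB) ^ 2 : ℝ)) : ℂ) := by
      push_cast
      ring
    rw [this, Complex.ofReal_re]
  have htρ : ((ρ * ρ).trace).re
      = (α / dB) ^ 2 * dB + 2 * (α / dB) * ((1 - α) / dA) + ((1 - α) / dA) ^ 2 * dA := by
    rw [hρ, hEA, hEB, trace_sq_kron hApos hBpos]
    have : ((α : ℂ) * (dB : ℂ)⁻¹) ^ 2 * (dB : ℂ)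
        + 2 * ((α : ℂ) * (dB : ℂ)⁻¹) * (((1 - α : ℝ) : ℂ) * (dA : ℂ)⁻¹)
        + (((1 - α : ℝ) : ℂ) * (dA : ℂ)⁻¹) ^ 2 * (dA : ℂ)
        = (((α / dB) ^ 2 * dB + 2 * (α / dB) * ((1 - α) / dA)
            + ((1 - α) / dA) ^ 2 * dA : ℝ) : ℂ) := by
      push_cast
      ring
    rw [this, Complex.ofReal_re]
  have e1 : linEntropy (ptraceB ρ) = ((dA : ℝ) - 1) / dA * (1 - α ^ 2) := by
    rw [linEntropy, htB]
    field_simp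
    ring
  have e2 : linEntropy (ptraceA ρ) = ((dB : ℝ) - 1) / dB * (2 * α - α ^ 2) := by
    rw [linEntropy, htA]
    field_simp
    ring
  have e3 : linEntropy ρ = ((dA : ℝ) - 1) / dA + 2 * ((dB : ℝ) - 1) / ((dA : ℝ) * dB) * α
      - ((dA : ℝ) + dB - 2) / ((dA : ℝ) * dB) * α ^ 2 := by
    rw [linEntropy, htρ]
    field_simp
    ring
  refine ⟨e1, e2, e3, ?_⟩
  rw [e1, e2, e3]
  field_simp
  ring
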